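/- Let C: f = 0 be a free divisor of degree d which is not a pencil of lines, with exponents d_1 ≤ d_2. Then τ(C) = m(f_s)_{d + d_2 − 3} + binom(d_2 − d_1, 2). -/

import Mathlib

open MvPolynomial

noncomputable section

/-- The polynomial ring `S = ℂ[x,y,z]`. -/
abbrev S3 : Type := MvPolynomial (Fin 3) ℂ

/-- The Jacobian ideal of `f`, generated by the three partial derivatives. -/
def jacobianIdeal (f : S3) : Ideal S3 :=
  Ideal.span {pderiv 0 f, pderiv 1 f, pderiv 2 f}

/-- The dimension `m(f)_k` of the degree `k` homogeneous component of the
Milnor algebra `M(f) = S/J_f`. -/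
def milnorDim (f : S3) (k : ℕ) : ℕ :=
  Module.finrank ℂ (Submodule.map (Ideal.Quotient.mkₐ ℂ (jacobianIdeal f)).toLinearMap
    (homogeneousSubmodule (Fin 3) ℂ k))

/-- The `S`-linear map `(a,b,c) ↦ a f_x + b f_y + c f_z`. -/
def relMap (f : S3) : (Fin 3 → S3) →ₗ[S3] S3 where
  toFun ρ := ∑ i, ρ i * pderiv i f
  map_add' a b := by simp [add_mul, Finset.sum_add_distrib]
  map_smul' c a := by simp [Finset.mul_sum, mul_assoc]

/-- The module `AR(f)` of all relations among the partial derivatives of `f`. -/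
def AR (f : S3) : Submodule S3 (Fin 3 → S3) := LinearMap.ker (relMap f)

/-- The degree `m` graded piece `AR(f)_m`, as a `ℂ`-subspace of `S³`. -/
def ARgr (f : S3) (m : ℕ) : Submodule ℂ (Fin 3 → S3) :=
  (LinearMap.ker ((relMap f).restrictScalars ℂ)) ⊓
    Submodule.pi Set.univ (fun _ => homogeneousSubmodule (Fin 3) ℂ m)

/-- `ar(f)_m = dim_ℂ AR(f)_m`. -/
def arDim (f : S3) (m : ℕ) : ℕ := Module.finrank ℂ (ARgr f m)

/-- A vector of polynomials is homogeneous of degree `m` if all components are. -/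
def IsHomogVec (ρ : Fin 3 → S3) (m : ℕ) : Prop := ∀ i, (ρ i).IsHomogeneous m

/-- `C : f = 0` is a free divisor with exponents `d₁, d₂` if `AR(f)` is a free
`S`-module with a homogeneous basis in degrees `d₁` and `d₂`. -/
def IsFreeDivisorWith (f : S3) (d₁ d₂ : ℕ) : Prop :=
  ∃ b : Module.Basis (Fin 2) S3 (AR f),
    IsHomogVec (↑(b 0)) d₁ ∧ IsHomogVec (↑(b 1)) d₂

/-- `C : f = 0` is a free divisor if `AR(f)` is a free graded `S`-module of rank two. -/
def IsFreeDivisor (f : S3) : Prop := ∃ d₁ d₂ : ℕ, IsFreeDivisorWith f d₁ d₂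

/-- `binom(a, 2)` for an integer `a`, zero when `a < 2`. -/
def chooseTwo (a : ℤ) : ℤ := (a.toNat).choose 2

/-- The Hilbert function `m(f_s)_k` of the Milnor algebra of a smooth plane curve
of degree `d`. -/
def smoothMilnorDim (d : ℕ) (k : ℤ) : ℤ :=
  chooseTwo (k + 2) - 3 * chooseTwo (k - d + 3) + 3 * chooseTwo (k - 2 * d + 4)
    - chooseTwo (k - 3 * d + 5)

/-- `m(f)_k` extended to integer indices by zero. -/
def milnorDimZ (f : S3) (k : ℤ) : ℤ := if k < 0 then 0 else milnorDim f k.toNat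

/-- `ar(f)_m` extended to integer indices by zero. -/
def arDimZ (f : S3) (m : ℤ) : ℤ := if m < 0 then 0 else arDim f m.toNat

/-- The coincidence threshold `ct(f)`. -/
def ctf (f : S3) (d : ℕ) : ℕ :=
  sSup {q : ℕ | ∀ k ≤ q, (milnorDim f k : ℤ) = smoothMilnorDim d k}

/-- The stability threshold `st(f)`. -/
def stf (f : S3) (τ : ℕ) : ℕ := sInf {q : ℕ | ∀ k ≥ q, milnorDim f k = τ}

/-- `mdr(f)`, the minimal degree of a syzygy. -/
def mdr (f : S3) : ℕ := sInf {q : ℕ | ARgr f q ≠ ⊥}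

/-- The irrelevant maximal ideal `(x,y,z)`. -/
def maxIdeal3 : Ideal S3 := Ideal.span {X 0, X 1, X 2}

/-- The saturation `I_f` of the Jacobian ideal with respect to `(x,y,z)`. -/
def satJacobian (f : S3) : Ideal S3 := ⨆ n : ℕ, (jacobianIdeal f).colon ((maxIdeal3 ^ n : Ideal S3) : Set S3)

set_option maxHeartbeats 1000000
set_option synthInstance.maxHeartbeats 400000



lemma degree_eq_card (f : Fin 3 →₀ ℕ) : f.degree = Multiset.card (Finsupp.toMultiset f) := by
  rw [Finsupp.card_toMultiset]; rfl

def degIdxEquiv (k : ℕ) : {d : Fin 3 →₀ ℕ // d.degree = k} ≃ Sym (Fin 3) k where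
  toFun d := ⟨Finsupp.toMultiset d.1, by rw [← degree_eq_card]; exact d.2⟩
  invFun m := ⟨Multiset.toFinsupp m.1, by
    rw [degree_eq_card, Multiset.toFinsupp_toMultiset]; exact m.2⟩
  left_inv d := Subtype.ext (by simp)
  right_inv m := Subtype.ext (by simp)

instance degIdxFintype (k : ℕ) : Fintype {d : Fin 3 →₀ ℕ // d.degree = k} :=
  Fintype.ofEquiv _ (degIdxEquiv k).symm

lemma degIdx_card (k : ℕ) : Fintype.card {d : Fin 3 →₀ ℕ // d.degree = k} = (k+2).choose 2 := by
  rw [Fintype.card_congr (degIdxEquiv k), Sym.card_sym_eq_choose, Fintype.card_fin,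
    show 3 + k - 1 = k + 2 by omega]
  have := Nat.choose_symm (n := k+2) (k := k) (by omega)
  rw [show k + 2 - k = 2 by omega] at this
  exact this.symm

/-- the monomial family of degree k -/
def monFam (k : ℕ) : {d : Fin 3 →₀ ℕ // d.degree = k} → S3 := fun d => monomial d.1 (1 : ℂ)

lemma monFam_li (k : ℕ) : LinearIndependent ℂ (monFam k) :=
  (basisMonomials (Fin 3) ℂ).linearIndependent.comp Subtype.val Subtype.val_injective

lemma homog_eq_span (k : ℕ) :
    homogeneousSubmodule (Fin 3) ℂ k = Submodule.span ℂ (Set.range (monFam k)) := by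
  apply le_antisymm
  · intro p hp
    rw [mem_homogeneousSubmodule] at hp
    have hrepr : p = ∑ d ∈ p.support, monomial d (coeff d p) := p.support_sum_monomial_coeff.symm
    rw [hrepr]
    apply Submodule.sum_mem
    intro d hd
    have hdeg : d.degree = k := by
      rw [Finsupp.degree_eq_weight_one]
      exact hp (mem_support_iff.mp hd)
    have : monomial d (coeff d p) = (coeff d p) • monFam k ⟨d, hdeg⟩ := by
      simp [monFam, smul_monomial]
    rw [this]
    exact Submodule.smul_mem _ _ (Submodule.subset_span ⟨⟨d, hdeg⟩, rfl⟩)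
  · rw [Submodule.span_le]
    rintro _ ⟨d, rfl⟩
    rw [SetLike.mem_coe, mem_homogeneousSubmodule]
    exact isHomogeneous_monomial _ d.2

instance homog_fd (k : ℕ) : FiniteDimensional ℂ (homogeneousSubmodule (Fin 3) ℂ k) := by
  rw [homog_eq_span]
  exact FiniteDimensional.span_of_finite ℂ (Set.finite_range _)

lemma finrank_homog (k : ℕ) :
    Module.finrank ℂ (homogeneousSubmodule (Fin 3) ℂ k) = (k+2).choose 2 := by
  rw [homog_eq_span, finrank_span_eq_card (monFam_li k), degIdx_card]


lemma fdeg_add (x y : Fin 3 →₀ ℕ) : (x + y).degree = x.degree + y.degree := by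
  simp [degree_eq_card, Finsupp.toMultiset_add]

lemma fdeg_single (i : Fin 3) : (Finsupp.single i 1).degree = 1 := by
  simp [degree_eq_card, Finsupp.toMultiset_single]

lemma hc_mul {a : S3} {n : ℕ} (ha : a.IsHomogeneous n) (p : S3) {k : ℕ} (hnk : n ≤ k) :
    homogeneousComponent k (p * a) = homogeneousComponent (k - n) p * a := by
  conv_lhs => rw [← p.sum_homogeneousComponent]
  rw [Finset.sum_mul, map_sum]
  have hterm : ∀ j ∈ Finset.range (p.totalDegree + 1),
      homogeneousComponent k (homogeneousComponent j p * a)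
      = if j = k - n then homogeneousComponent j p * a else 0 := by
    intro j _
    have hh : homogeneousComponent j p * a ∈ homogeneousSubmodule (Fin 3) ℂ (j + n) :=
      (mem_homogeneousSubmodule _ _).mpr ((homogeneousComponent_isHomogeneous j p).mul ha)
    rw [homogeneousComponent_of_mem hh]
    congr 1
    simp only [eq_iff_iff]
    omega
  rw [Finset.sum_congr rfl hterm, Finset.sum_ite_eq' (Finset.range (p.totalDegree + 1))]
  split
  · rfl
  · next h =>
    rw [homogeneousComponent_eq_zero, zero_mul]
    simp at h; omega

lemma pderiv_isHomogeneous {f : S3} {d : ℕ} (hf : f.IsHomogeneous d) (i : Fin 3) :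
    (pderiv i f).IsHomogeneous (d - 1) := by
  conv_lhs => rw [← f.support_sum_monomial_coeff]
  rw [map_sum]
  apply IsHomogeneous.sum
  intro s hs
  have hdeg : s.degree = d := by
    rw [Finsupp.degree_eq_weight_one]
    exact hf (mem_support_iff.mp hs)
  rw [pderiv_monomial]
  rcases Nat.eq_zero_or_pos (s i) with h0 | hpos
  · rw [h0]
    simp only [Nat.cast_zero, mul_zero, map_zero]
    exact isHomogeneous_zero _ _ _
  · apply isHomogeneous_monomial
    have hle : Finsupp.single i 1 ≤ s := by
      rw [Finsupp.single_le_iff]; omega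
    have : (s - Finsupp.single i 1) + Finsupp.single i 1 = s := tsub_add_cancel_of_le hle
    have hd1 : (s - Finsupp.single i 1).degree + (Finsupp.single i 1).degree = s.degree := by
      rw [← fdeg_add, this]
    rw [fdeg_single] at hd1
    omega

lemma arDim_eq {f : S3} {d₁ d₂ : ℕ} (b : Module.Basis (Fin 2) S3 (AR f))
    (hb0 : IsHomogVec (↑(b 0)) d₁) (hb1 : IsHomogVec (↑(b 1)) d₂) (h12 : d₁ ≤ d₂)
    {m : ℕ} (hm : d₂ ≤ m) :
    arDim f m = (m - d₁ + 2).choose 2 + (m - d₂ + 2).choose 2 := by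
  set H₁ := homogeneousSubmodule (Fin 3) ℂ (m - d₁) with hH₁
  set H₂ := homogeneousSubmodule (Fin 3) ℂ (m - d₂) with hH₂
  let Φ : H₁ × H₂ →ₗ[ℂ] (Fin 3 → S3) :=
  { toFun := fun ac => (ac.1 : S3) • ((b 0 : Fin 3 → S3)) + (ac.2 : S3) • ((b 1 : Fin 3 → S3))
    map_add' := by
      intro x y
      simp only [Submodule.coe_add, Prod.fst_add, Prod.snd_add, add_smul]
      abel
    map_smul' := by
      intro c x
      simp only [Prod.smul_fst, Prod.smul_snd, Submodule.coe_smul, smul_assoc, RingHom.id_apply,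
        smul_add] }
  have hΦinj : Function.Injective Φ := by
    rw [injective_iff_map_eq_zero]
    intro x hx
    have hx' : (x.1 : S3) • (b 0) + (x.2 : S3) • (b 1) = (0 : AR f) := by
      apply Subtype.ext
      rw [Submodule.coe_add, SetLike.val_smul, SetLike.val_smul, ZeroMemClass.coe_zero]
      exact hx
    have hli := b.linearIndependent
    rw [Fintype.linearIndependent_iff] at hli
    have key := hli ![(x.1 : S3), (x.2 : S3)] (by
      rw [Fin.sum_univ_two]
      simpa only [Matrix.cons_val_zero, Matrix.cons_val_one, Matrix.head_cons] using hx')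
    have h0 := key 0
    have h1 := key 1
    simp only [Matrix.cons_val_zero] at h0
    simp only [Matrix.cons_val_one, Matrix.head_cons, Matrix.cons_val_zero] at h1
    apply Prod.ext <;> apply Subtype.ext <;> simp [h0, h1]
  have hrange : LinearMap.range Φ = ARgr f m := by
    apply le_antisymm
    · rintro _ ⟨⟨a, c⟩, rfl⟩
      refine Submodule.mem_inf.mpr ⟨?_, ?_⟩
      · -- in kernel of relMap
        have h0 : relMap f ((b 0 : AR f) : Fin 3 → S3) = 0 := (b 0).2
        have h1 : relMap f ((b 1 : AR f) : Fin 3 → S3) = 0 := (b 1).2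
        rw [LinearMap.mem_ker, LinearMap.restrictScalars_apply]
        show relMap f ((a : S3) • ((b 0 : AR f) : Fin 3 → S3)
          + (c : S3) • ((b 1 : AR f) : Fin 3 → S3)) = 0
        rw [map_add, LinearMap.map_smul, LinearMap.map_smul, h0, h1, smul_zero, smul_zero,
          add_zero]
      · intro i _
        have hmul0 : ((a : S3) * (b 0 : Fin 3 → S3) i).IsHomogeneous m := by
          have := (a.2 : (a : S3).IsHomogeneous (m - d₁)).mul (hb0 i)
          rwa [Nat.sub_add_cancel (le_trans h12 hm)] at this
        have hmul1 : ((c : S3) * (b 1 : Fin 3 → S3) i).IsHomogeneous m := by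
          have := (c.2 : (c : S3).IsHomogeneous (m - d₂)).mul (hb1 i)
          rwa [Nat.sub_add_cancel hm] at this
        exact Submodule.add_mem _ ((mem_homogeneousSubmodule _ _).mpr hmul0)
          ((mem_homogeneousSubmodule _ _).mpr hmul1)
    · intro ρ hρ
      obtain ⟨hker, hpi⟩ := hρ
      have hmem : ρ ∈ AR f := hker
      set x : AR f := ⟨ρ, hmem⟩ with hxdef
      have hrepr : (b.repr x 0) • (b 0) + (b.repr x 1) • (b 1) = x := by
        conv_rhs => rw [← b.sum_repr x]
        rw [Fin.sum_univ_two]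
      set p := b.repr x 0 with hp
      set q := b.repr x 1 with hq
      have hcomp : ∀ i, ρ i = p * (b 0 : Fin 3 → S3) i + q * (b 1 : Fin 3 → S3) i := by
        intro i
        have := congrArg (fun y : AR f => (y : Fin 3 → S3) i) hrepr
        simp only [Submodule.coe_add, SetLike.val_smul, Pi.add_apply, Pi.smul_apply,
          smul_eq_mul] at this
        exact this.symm
      refine ⟨⟨⟨homogeneousComponent (m - d₁) p, homogeneousComponent_mem _ _⟩,
              ⟨homogeneousComponent (m - d₂) q, homogeneousComponent_mem _ _⟩⟩, ?_⟩
      funext i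
      have hρi : ρ i ∈ homogeneousSubmodule (Fin 3) ℂ m := hpi i (Set.mem_univ i)
      calc (homogeneousComponent (m - d₁) p) * (b 0 : Fin 3 → S3) i
            + (homogeneousComponent (m - d₂) q) * (b 1 : Fin 3 → S3) i
          = homogeneousComponent m (p * (b 0 : Fin 3 → S3) i)
            + homogeneousComponent m (q * (b 1 : Fin 3 → S3) i) := by
            rw [hc_mul (hb0 i) p (le_trans h12 hm), hc_mul (hb1 i) q hm]
        _ = homogeneousComponent m (ρ i) := by rw [← map_add, ← hcomp i]
        _ = ρ i := by rw [homogeneousComponent_of_mem hρi, if_pos rfl]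
  have : arDim f m = Module.finrank ℂ (H₁ × H₂) := by
    rw [arDim, ← hrange]
    exact (LinearEquiv.finrank_eq (LinearEquiv.ofInjective Φ hΦinj)).symm
  rw [this, Module.finrank_prod, hH₁, hH₂, finrank_homog, finrank_homog]
variable (f : S3)

/-- inclusion of (H_j)³ into S³ -/
def coePi (j : ℕ) : (Fin 3 → homogeneousSubmodule (Fin 3) ℂ j) →ₗ[ℂ] (Fin 3 → S3) :=
  LinearMap.pi (fun i => (homogeneousSubmodule (Fin 3) ℂ j).subtype ∘ₗ LinearMap.proj i)

lemma coePi_apply (j : ℕ) (x : Fin 3 → homogeneousSubmodule (Fin 3) ℂ j) (i : Fin 3) :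
    coePi j x i = (x i : S3) := rfl

lemma coePi_inj (j : ℕ) : Function.Injective (coePi j) := by
  intro x y h
  funext i
  exact Subtype.ext (congrFun h i)

lemma coePi_range (j : ℕ) : LinearMap.range (coePi j)
    = Submodule.pi Set.univ (fun _ => homogeneousSubmodule (Fin 3) ℂ j) := by
  apply le_antisymm
  · rintro _ ⟨x, rfl⟩ i _
    exact (x i).2
  · intro x hx
    exact ⟨fun i => ⟨x i, hx i (Set.mem_univ i)⟩, rfl⟩

lemma milnor_key {f : S3} {d : ℕ} (hf : f.IsHomogeneous d) {j : ℕ} :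
    milnorDim f (j + (d - 1)) + 3 * ((j+2).choose 2)
      = ((j + (d-1)) + 2).choose 2 + arDim f j := by
  set k := j + (d - 1) with hk
  set J := jacobianIdeal f with hJ
  set Hk := homogeneousSubmodule (Fin 3) ℂ k with hHk
  set Hj := homogeneousSubmodule (Fin 3) ℂ j with hHj
  set q := (Ideal.Quotient.mkₐ ℂ J).toLinearMap with hq
  -- step a
  have hkerq : LinearMap.ker q = J.restrictScalars ℂ := by
    ext x
    simp only [LinearMap.mem_ker, hq, AlgHom.toLinearMap_apply, Ideal.Quotient.mkₐ_eq_mk,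
      Submodule.restrictScalars_mem]
    exact Ideal.Quotient.eq_zero_iff_mem
  set φ := q ∘ₗ Hk.subtype with hφ
  have hrangeφ : LinearMap.range φ = Submodule.map q Hk := by
    rw [hφ, LinearMap.range_comp, Submodule.range_subtype]
  have hkerφ : LinearMap.ker φ = Submodule.comap Hk.subtype ((J.restrictScalars ℂ) ⊓ Hk) := by
    rw [hφ, LinearMap.ker_comp, hkerq]
    ext x
    simp only [Submodule.mem_comap, Submodule.mem_inf]
    exact ⟨fun h => ⟨h, x.2⟩, fun h => h.1⟩
  have ha : milnorDim f k + Module.finrank ℂ ((J.restrictScalars ℂ) ⊓ Hk : Submodule ℂ S3)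
      = (k+2).choose 2 := by
    have := LinearMap.finrank_range_add_finrank_ker φ
    rw [hrangeφ, hkerφ] at this
    rw [milnorDim]
    have heq : Module.finrank ℂ (Submodule.comap Hk.subtype ((J.restrictScalars ℂ) ⊓ Hk))
        = Module.finrank ℂ ((J.restrictScalars ℂ) ⊓ Hk : Submodule ℂ S3) :=
      LinearEquiv.finrank_eq (Submodule.comapSubtypeEquivOfLe inf_le_right)
    rw [heq] at this
    rw [← finrank_homog k, ← this]
  -- step b
  set Ψ := (relMap f).restrictScalars ℂ with hΨ
  set Θ := Ψ ∘ₗ coePi j with hΘ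
  have hpd : ∀ i : Fin 3, pderiv i f ∈ J := by
    intro i
    fin_cases i <;> exact Ideal.subset_span (by simp)
  have hrangeΘ : LinearMap.range Θ = (J.restrictScalars ℂ) ⊓ Hk := by
    apply le_antisymm
    · rintro _ ⟨x, rfl⟩
      have hexp : Θ x = ∑ i, (x i : S3) * pderiv i f := rfl
      refine Submodule.mem_inf.mpr ⟨?_, ?_⟩
      · rw [Submodule.restrictScalars_mem, hexp]
        exact Ideal.sum_mem _ (fun i _ => Ideal.mul_mem_left _ _ (hpd i))
      · rw [hHk, mem_homogeneousSubmodule, hexp]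
        apply IsHomogeneous.sum
        intro i _
        have := ((x i).2 : ((x i : S3)).IsHomogeneous j).mul (pderiv_isHomogeneous hf i)
        exact this
    · intro g hg
      rw [Submodule.mem_inf] at hg
      obtain ⟨hgJ, hgH⟩ := hg
      rw [Submodule.restrictScalars_mem, hJ, jacobianIdeal] at hgJ
      rw [show ({pderiv 0 f, pderiv 1 f, pderiv 2 f} : Set S3)
        = insert (pderiv 0 f) (insert (pderiv 1 f) {pderiv 2 f}) from rfl] at hgJ
      rw [Ideal.mem_span_insert] at hgJ
      obtain ⟨p, z, hz, hg⟩ := hgJ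
      rw [Ideal.mem_span_insert] at hz
      obtain ⟨p2, z2, hz2, hzeq⟩ := hz
      rw [Ideal.mem_span_singleton] at hz2
      obtain ⟨p3, hz3⟩ := hz2
      have hgrep : g = p * pderiv 0 f + p2 * pderiv 1 f + p3 * pderiv 2 f := by
        rw [hg, hzeq, hz3]; ring
      have hdk : d - 1 ≤ k := by omega
      have hkd : k - (d - 1) = j := by omega
      have hchc : ∀ i : Fin 3, (pderiv i f).IsHomogeneous (d-1) := pderiv_isHomogeneous hf
      have hgH' : g ∈ homogeneousSubmodule (Fin 3) ℂ k := hgH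

      have hgid : homogeneousComponent k g = g := by
        rw [homogeneousComponent_of_mem hgH', if_pos rfl]
      have hgc : g = homogeneousComponent j p * pderiv 0 f
          + homogeneousComponent j p2 * pderiv 1 f
          + homogeneousComponent j p3 * pderiv 2 f := by
        conv_lhs => rw [← hgid, hgrep]
        rw [map_add, map_add, hc_mul (hchc 0) p hdk, hc_mul (hchc 1) p2 hdk,
          hc_mul (hchc 2) p3 hdk, hkd]
      refine ⟨![⟨homogeneousComponent j p, homogeneousComponent_mem _ _⟩,
               ⟨homogeneousComponent j p2, homogeneousComponent_mem _ _⟩,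
               ⟨homogeneousComponent j p3, homogeneousComponent_mem _ _⟩], ?_⟩
      have hexp2 : ∀ x, Θ x = ∑ i, (x i : S3) * pderiv i f := fun _ => rfl
      rw [hexp2, Fin.sum_univ_three]
      simp only [Matrix.cons_val_zero, Matrix.cons_val_one, Matrix.head_cons,
        Matrix.cons_val_two, Matrix.tail_cons]
      exact hgc.symm
  -- step c
  have hkerΘ : Module.finrank ℂ (LinearMap.ker Θ) = arDim f j := by
    have h1 : LinearMap.ker Θ = Submodule.comap (coePi j) (LinearMap.ker Ψ) := by
      rw [hΘ, LinearMap.ker_comp]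
    have e := Submodule.equivMapOfInjective (coePi j) (coePi_inj j) (LinearMap.ker Θ)
    have h2 : Submodule.map (coePi j) (LinearMap.ker Θ) = ARgr f j := by
      rw [h1, Submodule.map_comap_eq, coePi_range, ARgr]
      rw [inf_comm]
    rw [LinearEquiv.finrank_eq e, h2, arDim]
  -- combine
  have hb : Module.finrank ℂ ((J.restrictScalars ℂ) ⊓ Hk : Submodule ℂ S3) + arDim f j
      = 3 * ((j+2).choose 2) := by
    have := LinearMap.finrank_range_add_finrank_ker Θ
    rw [hrangeΘ, hkerΘ] at this
    rw [this, Module.finrank_pi_fintype, Finset.sum_const]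
    simp [finrank_homog]
  omega
-- chooseTwo arithmetic
lemma two_mul_choose_two (a : ℕ) : 2 * a.choose 2 = a * (a - 1) := by
  induction a with
  | zero => rfl
  | succ m ih =>
    rw [Nat.choose_succ_succ, Nat.choose_one_right, Nat.mul_add, ih, Nat.succ_sub_one]
    cases m with
    | zero => rfl
    | succ p => rw [Nat.succ_sub_one]; ring

lemma two_mul_chooseTwo {a : ℤ} (ha : 0 ≤ a) : 2 * chooseTwo a = a * (a - 1) := by
  rw [chooseTwo]
  rcases le_or_gt a 1 with h1 | h1
  · have h0 : a.toNat ≤ 1 := by omega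
    interval_cases h : a.toNat
    · simp; omega
    · simp [Nat.choose]; omega
  · have h2 : 1 ≤ a.toNat := by omega
    have h := two_mul_choose_two a.toNat
    have hc : ((a.toNat * (a.toNat - 1) : ℕ) : ℤ) = a * (a - 1) := by
      push_cast [h2]
      rw [Int.toNat_of_nonneg ha]
    rw [← hc, ← h]
    push_cast
    ring

lemma chooseTwo_nonpos {a : ℤ} (ha : a ≤ 1) : chooseTwo a = 0 := by
  rw [chooseTwo]
  have : a.toNat < 2 := by omega
  rw [Nat.choose_eq_zero_of_lt this]
  rfl

lemma choose_succ_two (a : ℕ) : (a+1).choose 2 = a.choose 2 + a := by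
  rw [Nat.choose_succ_succ, Nat.choose_one_right, Nat.add_comm]

theorem stmt7 (f : S3) (d : ℕ) (hf : f.IsHomogeneous d) (hred : Squarefree f)
    (d₁ d₂ : ℕ) (hfree : IsFreeDivisorWith f d₁ d₂) (h12 : d₁ ≤ d₂) (hpencil : 1 ≤ d₁)
    (τ : ℕ) (hτ : ∃ N : ℕ, ∀ k ≥ N, milnorDim f k = τ) :
    (τ : ℤ) = smoothMilnorDim d ((d : ℤ) + d₂ - 3) + chooseTwo ((d₂ : ℤ) - d₁) := by
  obtain ⟨b, hb0, hb1⟩ := hfree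
  obtain ⟨N, hN⟩ := hτ
  have key : ∀ j : ℕ, d₂ ≤ j → milnorDim f (j + (d - 1)) + 3 * ((j+2).choose 2)
      = ((j + (d-1)) + 2).choose 2 + ((j - d₁ + 2).choose 2 + (j - d₂ + 2).choose 2) := by
    intro j hj
    have h1 := milnor_key (f := f) hf (j := j)
    rw [arDim_eq b hb0 hb1 h12 hj] at h1
    exact h1
  -- Step 1: d - 1 = d₁ + d₂
  have hstep1 : d - 1 = d₁ + d₂ := by
    set j := N + d₂ with hjdef
    have e1 := key j (by omega)
    have e2 := key (j+1) (by omega)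
    rw [hN (j + (d-1)) (by omega)] at e1
    rw [hN (j+1 + (d-1)) (by omega)] at e2
    rw [show j+1+2 = (j+2)+1 by omega, show (j+1 + (d-1)) + 2 = ((j + (d-1)) + 2)+1 by omega,
        show (j+1) - d₁ + 2 = (j - d₁ + 2)+1 by omega,
        show (j+1) - d₂ + 2 = (j - d₂ + 2)+1 by omega,
        choose_succ_two (j+2), choose_succ_two (j + (d-1) + 2),
        choose_succ_two (j - d₁ + 2), choose_succ_two (j - d₂ + 2)] at e2
    generalize (j+2).choose 2 = A at e1 e2
    generalize ((j + (d-1)) + 2).choose 2 = B at e1 e2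
    generalize (j - d₁ + 2).choose 2 = C at e1 e2
    generalize (j - d₂ + 2).choose 2 = D at e1 e2
    omega
  have hd3 : (d:ℤ) = (d₁:ℤ) + d₂ + 1 := by omega
  -- Step 2
  set j := N + d₂ with hjdef
  obtain ⟨u, hu⟩ : ∃ u, j = d₁ + u := ⟨j - d₁, by omega⟩
  obtain ⟨v, hv⟩ : ∃ v, j = d₂ + v := ⟨j - d₂, by omega⟩
  have e1 := key j (by omega)
  rw [hN (j + (d-1)) (by omega), hstep1,
    show j - d₁ + 2 = u + 2 by omega, show j - d₂ + 2 = v + 2 by omega] at e1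
  have E : (τ:ℤ) + 3 * (((j+2).choose 2 : ℕ) : ℤ)
      = (((j + (d₁ + d₂) + 2).choose 2 : ℕ) : ℤ)
        + ((((u+2).choose 2 : ℕ) : ℤ) + (((v+2).choose 2 : ℕ) : ℤ)) := by
    exact_mod_cast e1
  have pA : (2:ℤ) * (((j+2).choose 2 : ℕ) : ℤ) = ((j:ℤ)+2)*((j:ℤ)+1) := by
    have h := two_mul_choose_two (j+2)
    rw [show (j+2)-1 = j+1 by omega] at h
    exact_mod_cast h
  have pB : (2:ℤ) * (((j + (d₁ + d₂) + 2).choose 2 : ℕ) : ℤ)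
      = ((j:ℤ)+((d₁:ℤ)+(d₂:ℤ))+2)*((j:ℤ)+((d₁:ℤ)+(d₂:ℤ))+1) := by
    have h := two_mul_choose_two (j + (d₁ + d₂) + 2)
    rw [show (j + (d₁ + d₂) + 2)-1 = j + (d₁ + d₂) + 1 by omega] at h
    exact_mod_cast h
  have pC : (2:ℤ) * (((u+2).choose 2 : ℕ) : ℤ) = ((u:ℤ)+2)*((u:ℤ)+1) := by
    have h := two_mul_choose_two (u+2)
    rw [show (u+2)-1 = u+1 by omega] at h
    exact_mod_cast h
  have pD : (2:ℤ) * (((v+2).choose 2 : ℕ) : ℤ) = ((v:ℤ)+2)*((v:ℤ)+1) := by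
    have h := two_mul_choose_two (v+2)
    rw [show (v+2)-1 = v+1 by omega] at h
    exact_mod_cast h
  rw [show (u:ℤ) = (j:ℤ) - d₁ by omega] at pC
  rw [show (v:ℤ) = (j:ℤ) - d₂ by omega] at pD
  have hfin : (2:ℤ) * τ = ((j:ℤ)+(d₁:ℤ)+(d₂:ℤ)+2)*((j:ℤ)+(d₁:ℤ)+(d₂:ℤ)+1)
      + ((j:ℤ) - d₁ + 2)*((j:ℤ) - d₁ + 1) + ((j:ℤ) - d₂ + 2)*((j:ℤ) - d₂ + 1)
      - 3*(((j:ℤ)+2)*((j:ℤ)+1)) := by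
    linear_combination 2*E + pB + pC + pD - 3*pA
  -- RHS
  rw [smoothMilnorDim, hd3]
  rw [show ((d₁:ℤ) + d₂ + 1 + d₂ - 3 + 2) = ((d₁:ℤ) + 2*d₂) by ring,
      show ((d₁:ℤ) + d₂ + 1 + d₂ - 3 - ((d₁:ℤ) + d₂ + 1) + 3) = (d₂:ℤ) by ring,
      show ((d₁:ℤ) + d₂ + 1 + d₂ - 3 - 2*((d₁:ℤ) + d₂ + 1) + 4) = -(d₁:ℤ) by ring,
      show ((d₁:ℤ) + d₂ + 1 + d₂ - 3 - 3*((d₁:ℤ) + d₂ + 1) + 5) = -(2*(d₁:ℤ) + d₂) by ring]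
  rw [chooseTwo_nonpos (show (-(d₁:ℤ) ≤ 1) by omega),
      chooseTwo_nonpos (show (-(2*(d₁:ℤ) + d₂) ≤ 1) by omega)]
  have q1 : (2:ℤ) * chooseTwo ((d₁:ℤ) + 2*d₂)
      = ((d₁:ℤ) + 2*d₂)*((d₁:ℤ) + 2*d₂ - 1) := by
    rw [two_mul_chooseTwo (by omega)]
  have q2 : (2:ℤ) * chooseTwo ((d₂:ℤ)) = (d₂:ℤ)*((d₂:ℤ) - 1) :=
    two_mul_chooseTwo (by omega)
  have q3 : (2:ℤ) * chooseTwo ((d₂:ℤ) - d₁) = ((d₂:ℤ) - d₁)*((d₂:ℤ) - d₁ - 1) :=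
    two_mul_chooseTwo (by omega)
  have h2 : (2:ℤ) * τ = 2 * (chooseTwo ((d₁:ℤ) + 2*d₂) - 3*chooseTwo ((d₂:ℤ))
      + chooseTwo ((d₂:ℤ) - d₁)) := by
    linear_combination hfin - q1 + 3*q2 - q3
  linarith [h2]

end
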